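/- Suppose f : ℝⁿ → ℝ is continuously differentiable with L-Lipschitz gradient and r : ℝⁿ → ℝ is convex. Fix x̄ ∈ ℝⁿ, ᾱ > 0, ε > 0, and suppose x̂ = x̄ + s satisfies: there exist w ∈ ℝⁿ with ‖w‖ ≤ √(2ᾱε) and g_ε := (1/ᾱ)(x̄ − ᾱ∇f(x̄) + w − x̂) ∈ ∂_ε r(x̂) (the ε-subdifferential). Then f(x̄+s) + r(x̄+s) ≤ f(x̄) + r(x̄) − (1/ᾱ − L/2)‖s‖² + √(2ε/ᾱ)‖s‖ + ε. -/

import Mathlib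

open InnerProductSpace

/-- Descent lemma. -/
lemma descent_lemma {n : ℕ} (L : ℝ) (hL : 0 ≤ L)
    (f : EuclideanSpace ℝ (Fin n) → ℝ)
    (gradf : EuclideanSpace ℝ (Fin n) → EuclideanSpace ℝ (Fin n))
    (hf : ∀ x, HasGradientAt f (gradf x) x)
    (hlip : ∀ x y, ‖gradf x - gradf y‖ ≤ L * ‖x - y‖)
    (x s : EuclideanSpace ℝ (Fin n)) :
    f (x + s) ≤ f x + (inner ℝ (gradf x) s : ℝ) + L / 2 * ‖s‖ ^ 2 := by
  set φ : ℝ → ℝ := fun t => f (x + t • s) - t * (inner ℝ (gradf x) s : ℝ) - L / 2 * t ^ 2 * ‖s‖ ^ 2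
    with hφ
  have hline : ∀ t : ℝ, HasDerivAt (fun t : ℝ => x + t • s) s t := by
    intro t
    simpa using ((hasDerivAt_id t).smul_const s).const_add x
  have hder : ∀ t : ℝ, HasDerivAt φ
      ((inner ℝ (gradf (x + t • s)) s : ℝ) - (inner ℝ (gradf x) s : ℝ) - L * t * ‖s‖ ^ 2) t := by
    intro t
    have h1 : HasDerivAt (fun t : ℝ => f (x + t • s)) ((inner ℝ (gradf (x + t • s)) s : ℝ)) t := by
      have := ((hf (x + t • s)).hasFDerivAt.comp t (hline t)).hasDerivAt
      exact this.congr_deriv (by simp)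
    have h2 : HasDerivAt (fun t : ℝ => t * (inner ℝ (gradf x) s : ℝ)) ((inner ℝ (gradf x) s : ℝ)) t := by
      simpa using (hasDerivAt_id t).mul_const ((inner ℝ (gradf x) s : ℝ))
    have h3 : HasDerivAt (fun t : ℝ => L / 2 * t ^ 2 * ‖s‖ ^ 2) (L * t * ‖s‖ ^ 2) t := by
      have := ((hasDerivAt_pow 2 t).const_mul (L / 2)).mul_const (‖s‖ ^ 2)
      exact this.congr_deriv (by ring)
    exact (h1.sub h2).sub h3
  have key : φ 1 ≤ φ 0 := by
    have hmono : AntitoneOn φ (Set.Icc (0:ℝ) 1) := by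
      apply antitoneOn_of_deriv_nonpos (convex_Icc 0 1)
      · exact fun t _ => (hder t).continuousAt.continuousWithinAt
      · intro t ht
        exact (hder t).differentiableAt.differentiableWithinAt
      · intro t ht
        rw [interior_Icc] at ht
        rw [(hder t).deriv]
        have hCS : (inner ℝ (gradf (x + t • s) - gradf x) s : ℝ) ≤ ‖gradf (x + t • s) - gradf x‖ * ‖s‖ :=
          real_inner_le_norm _ _
        have hl : ‖gradf (x + t • s) - gradf x‖ ≤ L * (t * ‖s‖) := by
          have := hlip (x + t • s) x
          simpa [norm_smul, abs_of_nonneg ht.1.le, mul_assoc] using this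
        have : (inner ℝ (gradf (x + t • s)) s : ℝ) - (inner ℝ (gradf x) s : ℝ) ≤ L * t * ‖s‖ ^ 2 := by
          have h := hCS.trans (by
            have := mul_le_mul_of_nonneg_right hl (norm_nonneg s)
            linarith [this] : ‖gradf (x + t • s) - gradf x‖ * ‖s‖ ≤ L * (t * ‖s‖) * ‖s‖)
          rw [inner_sub_left] at h
          nlinarith [h]
        linarith
    exact hmono (by norm_num) (by norm_num) (by norm_num)
  simp only [hφ, one_smul, zero_smul, add_zero] at key
  nlinarith [key]

/-- descent property of an inexact proximal-gradient step. -/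
theorem stmt2 {n : ℕ} (L αb ε : ℝ) (hL : 0 < L) (hαb : 0 < αb) (hε : 0 < ε)
    (f r : EuclideanSpace ℝ (Fin n) → ℝ)
    (gradf : EuclideanSpace ℝ (Fin n) → EuclideanSpace ℝ (Fin n))
    (hf : ∀ x, HasGradientAt f (gradf x) x)
    (hlip : ∀ x y, ‖gradf x - gradf y‖ ≤ L * ‖x - y‖)
    (hr : ConvexOn ℝ Set.univ r)
    (xbar s w : EuclideanSpace ℝ (Fin n))
    (hw : ‖w‖ ≤ Real.sqrt (2 * αb * ε))
    (geps : EuclideanSpace ℝ (Fin n))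
    (hgeps : geps = (1 / αb) • (xbar - αb • gradf xbar + w - (xbar + s)))
    (hsubdiff : ∀ z, r z ≥ r (xbar + s) + (inner ℝ geps (z - (xbar + s)) : ℝ) - ε) :
    f (xbar + s) + r (xbar + s) ≤
      f xbar + r xbar - (1 / αb - L / 2) * ‖s‖ ^ 2
        + Real.sqrt (2 * ε / αb) * ‖s‖ + ε := by
  have hdesc := descent_lemma L hL.le f gradf hf hlip xbar s
  have hsub := hsubdiff xbar
  have hvec : xbar - αb • gradf xbar + w - (xbar + s) = -(αb • gradf xbar) + w - s := by
    abel
  have hx : xbar - (xbar + s) = -s := by abel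
  have hinner : (inner ℝ geps (xbar - (xbar + s)) : ℝ)
      = (inner ℝ (gradf xbar) s : ℝ) - (1 / αb) * (inner ℝ w s : ℝ) + (1 / αb) * ‖s‖ ^ 2 := by
    rw [hgeps, hvec, hx, real_inner_smul_left]
    simp only [inner_neg_right, inner_sub_left, inner_add_left, inner_neg_left,
      real_inner_smul_left, real_inner_self_eq_norm_sq]
    field_simp
    ring
  have hws : (inner ℝ w s : ℝ) ≤ Real.sqrt (2 * αb * ε) * ‖s‖ :=
    (real_inner_le_norm w s).trans (mul_le_mul_of_nonneg_right hw (norm_nonneg s))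
  have hsqrt : Real.sqrt (2 * αb * ε) = αb * Real.sqrt (2 * ε / αb) := by
    rw [← Real.sqrt_sq hαb.le, ← Real.sqrt_mul (by positivity)]
    congr 1
    field_simp
    rw [Real.sq_sqrt (by positivity)]
  rw [hinner] at hsub
  have hinv : (0:ℝ) < 1 / αb := by positivity
  have hws' : (1 / αb) * (inner ℝ w s : ℝ) ≤ Real.sqrt (2 * ε / αb) * ‖s‖ := by
    calc (1 / αb) * (inner ℝ w s : ℝ) ≤ (1 / αb) * (Real.sqrt (2 * αb * ε) * ‖s‖) :=
          mul_le_mul_of_nonneg_left hws hinv.le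
      _ = Real.sqrt (2 * ε / αb) * ‖s‖ := by rw [hsqrt]; field_simp
  linarith
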